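/- For a pure state $|\psi\rangle \in \mathbb{C}^d$ (unit vector, density matrix $\rho = |\psi\rangle\langle\psi|$), if $\{M_i\}_{i=1}^{d+1}$ is a complete set of mutually unbiased bases, then summing the probability distributions over all bases gives $\sum_{i=1}^{d+1} \sum_{k=1}^{d} p^{(i)}_k{}^2 = \sum_{i=1}^{d+1}\sum_k |\langle \psi^i_k | \psi\rangle|^4 \le 2$, where $p^{(i)}_k = |\langle\psi^i_k|\psi\rangle|^2$. More generally, for any density matrix $\rho$, $\sum_{i=1}^{d+1}\sum_k \langle\psi^i_k|\rho|\psi^i_k\rangle^2 = \mathrm{tr}(\rho^2) + 1$. -/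

import Mathlib

open scoped BigOperators ComplexOrder

/-- Hermitian inner product on `Fin n → ℂ`. -/
noncomputable def inn {n : ℕ} (u v : Fin n → ℂ) : ℂ :=
  ∑ i, (starRingEnd ℂ) (u i) * v i

namespace CMUB
open Matrix




variable {d : ℕ}

/-- Rank-one projector onto a basis vector. -/
noncomputable def P (B : Fin (d+1) → Fin d → Fin d → ℂ) (i : Fin (d+1)) (k : Fin d) :
    Matrix (Fin d) (Fin d) ℂ :=
  Matrix.of fun a b => B i k a * (starRingEnd ℂ) (B i k b)

lemma trace_P_mul (B : Fin (d+1) → Fin d → Fin d → ℂ) (i : Fin (d+1)) (k : Fin d)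
    (σ : Matrix (Fin d) (Fin d) ℂ) :
    (P B i k * σ).trace = ∑ a, ∑ b, (starRingEnd ℂ) (B i k a) * σ a b * B i k b := by
  rw [Matrix.trace]
  simp only [Matrix.diag, Matrix.mul_apply, P, Matrix.of_apply]
  rw [Finset.sum_comm]
  exact Finset.sum_congr rfl fun a _ => Finset.sum_congr rfl fun b _ => by ring

lemma inn_conj (u v : Fin d → ℂ) : (starRingEnd ℂ) (inn u v) = inn v u := by
  simp [inn, map_sum, mul_comm]

lemma trace_P_mul_P (B : Fin (d+1) → Fin d → Fin d → ℂ) (i : Fin (d+1)) (k : Fin d)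
    (j : Fin (d+1)) (l : Fin d) :
    (P B i k * P B j l).trace = inn (B j l) (B i k) * inn (B i k) (B j l) := by
  rw [trace_P_mul]
  simp only [P, Matrix.of_apply, inn, Finset.sum_mul, Finset.mul_sum]
  exact Finset.sum_congr rfl fun a _ => Finset.sum_congr rfl fun b _ => by ring

variable {d : ℕ}
lemma gram {B : Fin (d+1) → Fin d → Fin d → ℂ}
    (hON : ∀ i, ∀ j k, inn (B i j) (B i k) = if j = k then 1 else 0)
    (hMUB : ∀ i j, i ≠ j → ∀ k l, ‖inn (B i k) (B j l)‖ ^ 2 = 1 / d)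
    (i : Fin (d+1)) (k : Fin d) (j : Fin (d+1)) (l : Fin d) :
    (P B i k * P B j l).trace
      = if i = j then (if k = l then 1 else 0) else ((1 / d : ℝ) : ℂ) := by
  rw [trace_P_mul_P]
  by_cases h : i = j
  · subst h
    rw [hON, hON]
    by_cases hkl : k = l <;> simp [hkl, eq_comm]
  · rw [← inn_conj (B i k) (B j l), if_neg h]
    rw [Complex.conj_mul']
    norm_cast
    exact hMUB i j h k l

lemma sum_P {B : Fin (d+1) → Fin d → Fin d → ℂ}
    (hON : ∀ i, ∀ j k, inn (B i j) (B i k) = if j = k then 1 else 0)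
    (i : Fin (d+1)) : ∑ k, P B i k = 1 := by
  classical
  have h1 : (Matrix.of (fun a k => B i k a))ᴴ * (Matrix.of (fun a k => B i k a)) = 1 := by
    ext j k
    simp only [Matrix.mul_apply, Matrix.conjTranspose_apply, Matrix.one_apply,
      Matrix.of_apply, RCLike.star_def]
    have := hON i j k
    simpa [inn] using this
  have h2 : (Matrix.of (fun a k => B i k a)) * (Matrix.of (fun a k => B i k a))ᴴ = 1 :=
    mul_eq_one_comm.mp h1
  ext a b
  have := congrFun (congrFun h2 a) b
  simp only [Matrix.mul_apply, Matrix.conjTranspose_apply, Matrix.of_apply,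
    RCLike.star_def] at this
  simpa [P, Matrix.sum_apply] using this

lemma trace_P {B : Fin (d+1) → Fin d → Fin d → ℂ}
    (hON : ∀ i, ∀ j k, inn (B i j) (B i k) = if j = k then 1 else 0)
    (i : Fin (d+1)) (k : Fin d) : (P B i k).trace = 1 := by
  have := hON i k k
  simp only [inn, if_true, eq_self_iff_true] at this
  simp only [Matrix.trace, Matrix.diag, P, Matrix.of_apply]
  rw [← this]
  exact Finset.sum_congr rfl fun a _ => by ring
variable {d : ℕ}
lemma frame_gen (hd : 0 < d) {B : Fin (d+1) → Fin d → Fin d → ℂ}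
    (hON : ∀ i, ∀ j k, inn (B i j) (B i k) = if j = k then 1 else 0)
    (hMUB : ∀ i j, i ≠ j → ∀ k l, ‖inn (B i k) (B j l)‖ ^ 2 = 1 / d)
    (j : Fin (d+1)) (l : Fin d) :
    ∑ i, ∑ k, ((P B i k * P B j l).trace) • P B i k = P B j l + 1 := by
  classical
  set C : Matrix (Fin d) (Fin d) ℂ := ((1 / d : ℝ) : ℂ) • (1 : Matrix (Fin d) (Fin d) ℂ)
    with hC
  have key : ∀ i : Fin (d+1),
      (∑ k, ((P B i k * P B j l).trace) • P B i k) = if i = j then P B j l else C := by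
    intro i
    by_cases h : i = j
    · subst h
      rw [if_pos rfl]
      have h2 : ∀ k, ((P B i k * P B i l).trace) • P B i k
          = if k = l then P B i l else 0 := by
        intro k
        rw [gram hON hMUB, if_pos rfl]
        by_cases hk : k = l <;> simp [hk]
      rw [Finset.sum_congr rfl fun k _ => h2 k]
      simp
    · rw [if_neg h]
      have h2 : ∀ k, ((P B i k * P B j l).trace) • P B i k
          = ((1/d:ℝ):ℂ) • P B i k := by
        intro k; rw [gram hON hMUB, if_neg h]
      rw [Finset.sum_congr rfl fun k _ => h2 k, ← Finset.smul_sum, sum_P hON]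
  rw [Finset.sum_congr rfl fun i _ => key i]
  have split : ∀ i : Fin (d+1), (if i = j then P B j l else C)
      = C + (if i = j then P B j l - C else 0) := by
    intro i; by_cases h : i = j <;> simp [h]
  rw [Finset.sum_congr rfl fun i _ => split i, Finset.sum_add_distrib,
    Finset.sum_const, Finset.sum_ite_eq' Finset.univ j (fun _ => P B j l - C)]
  simp only [Finset.mem_univ, if_true, Finset.card_univ, Fintype.card_fin]
  have hdC : (d : ℕ) • C = 1 := by
    rw [hC, ← Nat.cast_smul_eq_nsmul ℂ, smul_smul]
    have : (d : ℂ) * ((1 / (d:ℝ) : ℝ) : ℂ) = 1 := by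
      push_cast
      rw [mul_one_div, div_self (by exact_mod_cast hd.ne' : (d:ℂ) ≠ 0)]
    rw [this, one_smul]
  have : (d + 1) • C = 1 + C := by rw [add_smul, hdC, one_smul]
  rw [this]
  abel

lemma frame_span (hd : 0 < d) {B : Fin (d+1) → Fin d → Fin d → ℂ}
    (hON : ∀ i, ∀ j k, inn (B i j) (B i k) = if j = k then 1 else 0)
    (hMUB : ∀ i j, i ≠ j → ∀ k l, ‖inn (B i k) (B j l)‖ ^ 2 = 1 / d)
    {σ : Matrix (Fin d) (Fin d) ℂ}
    (hσ : σ ∈ Submodule.span ℂ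
      (Set.range (fun ik : Fin (d+1) × Fin d => P B ik.1 ik.2))) :
    ∑ i, ∑ k, ((P B i k * σ).trace) • P B i k = σ + σ.trace • 1 := by
  induction hσ using Submodule.span_induction with
  | mem x hx =>
    obtain ⟨⟨j, l⟩, rfl⟩ := hx
    rw [frame_gen hd hON hMUB j l, trace_P hON, one_smul]
  | zero => simp
  | add x y hx hy ihx ihy =>
    simp only [Matrix.mul_add, Matrix.trace_add, add_smul, Finset.sum_add_distrib, ihx, ihy]
    abel
  | smul a x hx ih =>
    simp only [Matrix.mul_smul, Matrix.trace_smul, smul_eq_mul, ← smul_smul,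
      ← Finset.smul_sum, ih, smul_add]
variable {d : ℕ}
/-- embedding of `Fin (d-1)` into `Fin d` -/
def emb (hd : 0 < d) (k : Fin (d - 1)) : Fin d :=
  ⟨k.1, lt_of_lt_of_le k.2 (Nat.sub_le d 1)⟩

lemma emb_inj (hd : 0 < d) {k k' : Fin (d-1)} (h : emb hd k = emb hd k') : k = k' := by
  have := congrArg Fin.val h
  exact Fin.ext this

lemma emb_ne_last (hd : 0 < d) (k : Fin (d-1)) : emb hd k ≠ ⟨d - 1, by omega⟩ := by
  intro h
  have := congrArg Fin.val h
  simp only [emb] at this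
  omega

noncomputable def fam (hd : 0 < d) (B : Fin (d+1) → Fin d → Fin d → ℂ) :
    (Fin d ⊕ Fin d × Fin (d - 1)) → Matrix (Fin d) (Fin d) ℂ
  | Sum.inl k => P B 0 k
  | Sum.inr (i, k) => P B i.succ (emb hd k) - ((1 / d : ℝ) : ℂ) • 1

lemma span_P_eq_top (hd : 0 < d) {B : Fin (d+1) → Fin d → Fin d → ℂ}
    (hON : ∀ i, ∀ j k, inn (B i j) (B i k) = if j = k then 1 else 0)
    (hMUB : ∀ i j, i ≠ j → ∀ k l, ‖inn (B i k) (B j l)‖ ^ 2 = 1 / d) :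
    Submodule.span ℂ
      (Set.range (fun ik : Fin (d+1) × Fin d => P B ik.1 ik.2)) = ⊤ := by
  classical
  have hdinv : ((1 / d : ℝ) : ℂ) ≠ 0 := by
    simp only [ne_eq, Complex.ofReal_eq_zero]
    positivity
  -- linear independence of the auxiliary family
  have hli : LinearIndependent ℂ (fam hd B) := by
    rw [Fintype.linearIndependent_iff]
    intro g hg
    -- pairing with projectors
    have pair : ∀ (j : Fin (d+1)) (l : Fin d),
        ∑ m, g m * ((fam hd B m * P B j l).trace) = 0 := by
      intro j l
      have h0 := congrArg (fun σ => (σ * P B j l).trace) hg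
      simp only [Matrix.sum_mul, Matrix.smul_mul, Matrix.trace_sum, Matrix.trace_smul,
        Matrix.zero_mul, Matrix.trace_zero, smul_eq_mul] at h0
      exact h0
    -- values of the pairing
    have g1 : ∀ k l : Fin d, ((fam hd B (Sum.inl k) * P B 0 l).trace)
        = if k = l then 1 else 0 := by
      intro k l
      show (P B 0 k * P B 0 l).trace = _
      rw [gram hON hMUB, if_pos rfl]
    have g2 : ∀ (k : Fin d) (j : Fin d) (l : Fin d),
        ((fam hd B (Sum.inl k) * P B j.succ l).trace) = ((1 / d : ℝ) : ℂ) := by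
      intro k j l
      show (P B 0 k * P B j.succ l).trace = _
      rw [gram hON hMUB, if_neg (Fin.succ_ne_zero j).symm]
    have g3 : ∀ (i : Fin d) (k : Fin (d-1)) (l : Fin d),
        ((fam hd B (Sum.inr (i, k)) * P B 0 l).trace) = 0 := by
      intro i k l
      show ((P B i.succ (emb hd k) - ((1 / d : ℝ) : ℂ) • 1) * P B 0 l).trace = 0
      rw [Matrix.sub_mul, Matrix.trace_sub, Matrix.smul_mul, Matrix.one_mul,
        Matrix.trace_smul, gram hON hMUB, if_neg (Fin.succ_ne_zero i), trace_P hON]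
      simp
    have g4 : ∀ (i : Fin d) (k : Fin (d-1)) (j : Fin d) (l : Fin d),
        ((fam hd B (Sum.inr (i, k)) * P B j.succ l).trace)
          = (if i = j then (if emb hd k = l then 1 else 0) else ((1 / d : ℝ) : ℂ))
              - ((1 / d : ℝ) : ℂ) := by
      intro i k j l
      show ((P B i.succ (emb hd k) - ((1 / d : ℝ) : ℂ) • 1) * P B j.succ l).trace = _
      rw [Matrix.sub_mul, Matrix.trace_sub, Matrix.smul_mul, Matrix.one_mul,
        Matrix.trace_smul, gram hON hMUB, trace_P hON, smul_eq_mul, mul_one]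
      congr 2
      simp [Fin.succ_inj]
    -- Step A : the inl coefficients vanish
    have stepA : ∀ l : Fin d, g (Sum.inl l) = 0 := by
      intro l
      have h := pair 0 l
      rw [Fintype.sum_sum_type] at h
      simp only [g1, g3, mul_zero, mul_ite, mul_one, Finset.sum_const_zero, add_zero] at h
      rwa [Finset.sum_ite_eq' Finset.univ l (fun k => g (Sum.inl k)),
        if_pos (Finset.mem_univ l)] at h
    -- Step B : reduce to per-basis equations
    have hred : ∀ (j : Fin d) (l : Fin d),
        ∑ k : Fin (d-1), g (Sum.inr (j, k))
          * ((if emb hd k = l then 1 else 0) - ((1 / d : ℝ) : ℂ)) = 0 := by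
      intro j l
      have h := pair j.succ l
      rw [Fintype.sum_sum_type] at h
      simp only [g2, stepA, zero_mul, Finset.sum_const_zero, zero_add] at h
      rw [Fintype.sum_prod_type] at h
      have hsplit : ∀ i : Fin d, (∑ k : Fin (d-1),
          g (Sum.inr (i, k)) * ((fam hd B (Sum.inr (i, k)) * P B j.succ l).trace))
            = if i = j then
                (∑ k : Fin (d-1), g (Sum.inr (j, k))
                  * ((if emb hd k = l then 1 else 0) - ((1 / d : ℝ) : ℂ)))
              else 0 := by
        intro i
        by_cases hij : i = j
        · subst hij
          rw [if_pos rfl]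
          refine Finset.sum_congr rfl fun k _ => ?_
          rw [g4, if_pos rfl]
        · rw [if_neg hij]
          refine Finset.sum_eq_zero fun k _ => ?_
          rw [g4, if_neg hij, sub_self, mul_zero]
      rw [Finset.sum_congr rfl fun i _ => hsplit i,
        Finset.sum_ite_eq' Finset.univ j, if_pos (Finset.mem_univ j)] at h
      exact h
    -- Step C : per-basis sums vanish
    have hS : ∀ j : Fin d, ∑ k : Fin (d-1), g (Sum.inr (j, k)) = 0 := by
      intro j
      have h := hred j ⟨d - 1, by omega⟩
      have : ∀ k : Fin (d-1), g (Sum.inr (j, k))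
          * ((if emb hd k = (⟨d - 1, by omega⟩ : Fin d) then 1 else 0)
              - ((1 / d : ℝ) : ℂ))
          = g (Sum.inr (j, k)) * (-((1 / d : ℝ) : ℂ)) := by
        intro k
        rw [if_neg (emb_ne_last hd k), zero_sub]
      rw [Finset.sum_congr rfl fun k _ => this k, ← Finset.sum_mul] at h
      rcases mul_eq_zero.mp h with h' | h'
      · exact h'
      · exact absurd (neg_eq_zero.mp h') hdinv
    -- Step D : all inr coefficients vanish
    have stepB : ∀ (j : Fin d) (k : Fin (d-1)), g (Sum.inr (j, k)) = 0 := by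
      intro j k0
      have h := hred j (emb hd k0)
      have hexp : ∀ k : Fin (d-1), g (Sum.inr (j, k))
          * ((if emb hd k = emb hd k0 then 1 else 0) - ((1 / d : ℝ) : ℂ))
          = (if k = k0 then g (Sum.inr (j, k)) else 0)
            - g (Sum.inr (j, k)) * ((1 / d : ℝ) : ℂ) := by
        intro k
        by_cases hk : k = k0
        · subst hk; rw [if_pos rfl, if_pos rfl]; ring
        · rw [if_neg (fun hc => hk (emb_inj hd hc)), if_neg hk]; ring
      rw [Finset.sum_congr rfl fun k _ => hexp k, Finset.sum_sub_distrib,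
        Finset.sum_ite_eq' Finset.univ k0, if_pos (Finset.mem_univ k0),
        ← Finset.sum_mul, hS j, zero_mul, sub_zero] at h
      exact h
    intro m
    match m with
    | Sum.inl k => exact stepA k
    | Sum.inr (j, k) => exact stepB j k
  -- cardinality
  have hcard : Fintype.card (Fin d ⊕ Fin d × Fin (d - 1))
      = Module.finrank ℂ (Matrix (Fin d) (Fin d) ℂ) := by
    rw [Module.finrank_matrix]
    simp only [Fintype.card_sum, Fintype.card_prod, Fintype.card_fin, Module.finrank_self,
      mul_one]
    rcases d with _ | n
    · omega
    · simp only [Nat.succ_sub_one]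
      ring
  have : Nonempty (Fin d ⊕ Fin d × Fin (d - 1)) := ⟨Sum.inl ⟨0, hd⟩⟩
  have hspan : Submodule.span ℂ (Set.range (fam hd B)) = ⊤ :=
    hli.span_eq_top_of_card_eq_finrank hcard
  -- range of fam is inside the span of the projectors
  apply top_unique
  rw [← hspan]
  apply Submodule.span_le.mpr
  rintro x ⟨m, rfl⟩
  have hone : (1 : Matrix (Fin d) (Fin d) ℂ) ∈ Submodule.span ℂ
      (Set.range (fun ik : Fin (d+1) × Fin d => P B ik.1 ik.2)) := by
    rw [← sum_P hON 0]
    exact Submodule.sum_mem _ fun k _ => Submodule.subset_span ⟨(0, k), rfl⟩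
  match m with
  | Sum.inl k => exact Submodule.subset_span ⟨(0, k), rfl⟩
  | Sum.inr (i, k) =>
    exact Submodule.sub_mem _ (Submodule.subset_span ⟨(i.succ, emb hd k), rfl⟩)
      (Submodule.smul_mem _ _ hone)

end CMUB

theorem cmub_index_of_coincidence (d : ℕ) (hd : 0 < d)
    (B : Fin (d + 1) → Fin d → Fin d → ℂ)
    (hON : ∀ i, ∀ j k, inn (B i j) (B i k) = if j = k then 1 else 0)
    (hMUB : ∀ i j, i ≠ j → ∀ k l,
      ‖inn (B i k) (B j l)‖ ^ 2 = 1 / d)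
    (ρ : Matrix (Fin d) (Fin d) ℂ) (hρ : ρ.PosSemidef) (htr : ρ.trace = 1)
    (p : Fin (d + 1) → Fin d → ℝ)
    (hp : ∀ i k, p i k =
      (∑ a, ∑ b, (starRingEnd ℂ) (B i k a) * ρ a b * B i k b).re) :
    (∑ i, ∑ k, (p i k) ^ 2) = ((ρ * ρ).trace).re + 1 ∧
    ((∃ ψ : Fin d → ℂ, (∑ a, ‖ψ a‖ ^ 2 = 1) ∧
        ρ = Matrix.vecMulVec ψ (fun a => (starRingEnd ℂ) (ψ a))) →
      (∑ i, ∑ k, (p i k) ^ 2) ≤ 2) := by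
  classical
  have hρspan : ρ ∈ Submodule.span ℂ
      (Set.range (fun ik : Fin (d+1) × Fin d => CMUB.P B ik.1 ik.2)) := by
    rw [CMUB.span_P_eq_top hd hON hMUB]; exact Submodule.mem_top
  have hframe := CMUB.frame_span hd hON hMUB hρspan
  rw [htr, one_smul] at hframe
  have key : ∑ i, ∑ k, ((CMUB.P B i k * ρ).trace) * ((CMUB.P B i k * ρ).trace)
      = (ρ * ρ).trace + 1 := by
    have h0 := congrArg (fun σ => (σ * ρ).trace) hframe
    simp only [Matrix.sum_mul, Matrix.smul_mul, Matrix.trace_sum, Matrix.trace_smul,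
      smul_eq_mul, Matrix.add_mul, Matrix.trace_add, Matrix.one_mul] at h0
    rw [h0, htr]
  have creal : ∀ i k, (CMUB.P B i k * ρ).trace = ((p i k : ℝ) : ℂ) := by
    intro i k
    have hnn := hρ.dotProduct_mulVec_nonneg (B i k)
    have hdot : dotProduct (star (B i k)) (ρ.mulVec (B i k))
        = (CMUB.P B i k * ρ).trace := by
      rw [CMUB.trace_P_mul]
      simp only [dotProduct, Matrix.mulVec, Pi.star_apply, RCLike.star_def,
        Finset.mul_sum]
      exact Finset.sum_congr rfl fun a _ => Finset.sum_congr rfl fun b _ => by ring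
    rw [hdot] at hnn
    obtain ⟨hre, him⟩ := Complex.nonneg_iff.mp hnn
    apply Complex.ext
    · rw [hp i k, CMUB.trace_P_mul, Complex.ofReal_re]
    · rw [← him, Complex.ofReal_im]
  have hsum : ((∑ i, ∑ k, (p i k)^2 : ℝ) : ℂ) = (ρ * ρ).trace + 1 := by
    rw [← key]
    push_cast
    exact Finset.sum_congr rfl fun i _ => Finset.sum_congr rfl fun k _ => by
      rw [creal i k]; push_cast; ring
  have main : (∑ i, ∑ k, (p i k)^2) = ((ρ * ρ).trace).re + 1 := by
    have := congrArg Complex.re hsum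
    rw [Complex.ofReal_re, Complex.add_re, Complex.one_re] at this
    exact this
  refine ⟨main, ?_⟩
  rintro ⟨ψ, hψn, hψρ⟩
  rw [main]
  have hone : ∑ a, ψ a * (starRingEnd ℂ) (ψ a) = 1 := by
    have h1 : ∀ a, ψ a * (starRingEnd ℂ) (ψ a) = ((‖ψ a‖ ^ 2 : ℝ) : ℂ) := by
      intro a
      rw [Complex.mul_conj, Complex.sq_norm]
    rw [Finset.sum_congr rfl fun a _ => h1 a, ← Complex.ofReal_sum, hψn,
      Complex.ofReal_one]
  have htr2 : (ρ * ρ).trace = 1 := by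
    rw [hψρ]
    have : (Matrix.vecMulVec ψ (fun a => (starRingEnd ℂ) (ψ a))
        * Matrix.vecMulVec ψ (fun a => (starRingEnd ℂ) (ψ a))).trace
        = (∑ a, ψ a * (starRingEnd ℂ) (ψ a)) * (∑ b, ψ b * (starRingEnd ℂ) (ψ b)) := by
      rw [Fintype.sum_mul_sum]
      simp only [Matrix.trace, Matrix.diag, Matrix.mul_apply, Matrix.vecMulVec_apply]
      exact Finset.sum_congr rfl fun a _ => Finset.sum_congr rfl fun b _ => by ring
    rw [this, hone, one_mul]
  rw [htr2]
  norm_num
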